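/- Let U ~ Beta(u,v) and Z ~ Gamma(u, u+v) (shape u, rate u+v). For every ϱ ∈ [0,1) there exists a constant C_ϱ > 0 such that for all u, v ≥ 1 with u/(u+v) ≤ ϱ and all t ∈ [0,1], one has P(U ≤ t) ≤ C_ϱ · P(Z ≤ t). -/

import Mathlib

open Real MeasureTheory Set ProbabilityTheory

/-- Density of the Beta(u,v) distribution on (0,1). -/
noncomputable def betaPDFReal (a b x : ℝ) : ℝ :=
  if x ∈ Set.Ioo (0:ℝ) 1 then
    Real.Gamma (a + b) / (Real.Gamma a * Real.Gamma b) * x ^ (a - 1) * (1 - x) ^ (b - 1)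
  else 0

lemma gamma_interp {v s : ℝ} (hv : 0 < v) (hs0 : 0 ≤ s) (hs1 : s ≤ 1) :
    Real.Gamma (v + s) ≤ Real.Gamma v * v ^ s := by
  have hG : ∀ x : ℝ, 0 < x → 0 < Real.Gamma x := fun x hx => Real.Gamma_pos_of_pos hx
  have hmem : v + s ∈ Set.Ioi (0:ℝ) := by simp; linarith
  have h1 : v ∈ Set.Ioi (0:ℝ) := hv
  have h2 : v + 1 ∈ Set.Ioi (0:ℝ) := by simp; linarith
  have key := Real.convexOn_log_Gamma.2 h1 h2 (by linarith : (0:ℝ) ≤ 1 - s) hs0 (by ring)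
  have hcomb : (1 - s) • v + s • (v + 1) = v + s := by simp [smul_eq_mul]; ring
  rw [hcomb] at key
  simp only [Function.comp, smul_eq_mul] at key
  have : Real.log (Real.Gamma (v + s)) ≤ Real.log (Real.Gamma v * v ^ s) := by
    rw [Real.log_mul (hG v hv).ne' (Real.rpow_pos_of_pos hv s).ne', Real.log_rpow hv]
    calc Real.log (Real.Gamma (v+s)) ≤ (1-s) * Real.log (Real.Gamma v) + s * Real.log (Real.Gamma (v+1)) := key
    _ = Real.log (Real.Gamma v) + s * (Real.log (Real.Gamma (v+1)) - Real.log (Real.Gamma v)) := by ring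
    _ = Real.log (Real.Gamma v) + s * Real.log v := by
        rw [Real.Gamma_add_one hv.ne', Real.log_mul hv.ne' (hG v hv).ne']; ring_nf
  calc Real.Gamma (v+s) = Real.exp (Real.log (Real.Gamma (v+s))) := (Real.exp_log (hG _ (by linarith))).symm
  _ ≤ Real.exp (Real.log (Real.Gamma v * v ^ s)) := Real.exp_le_exp.2 this
  _ = _ := Real.exp_log (by positivity)

lemma exp_inv_le {y : ℝ} (hy : 0 < y) : Real.exp (1/(y+1)) ≤ (y+1)/y := by
  have h1 : (0:ℝ) < y + 1 := by linarith
  have h2 : Real.log (y/(y+1)) ≤ y/(y+1) - 1 := Real.log_le_sub_one_of_pos (by positivity)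
  have h3 : y/(y+1) - 1 = -(1/(y+1)) := by field_simp; ring
  have h4 : Real.log (y/(y+1)) = -Real.log ((y+1)/y) := by
    rw [← Real.log_inv]; congr 1; field_simp
  have h5 : 1/(y+1) ≤ Real.log ((y+1)/y) := by rw [h4, h3] at h2; linarith
  calc Real.exp (1/(y+1)) ≤ Real.exp (Real.log ((y+1)/y)) := Real.exp_le_exp.2 h5
  _ = (y+1)/y := Real.exp_log (by positivity)

lemma step_ineq {w M : ℝ} (hw : 0 < w) (hM : w + 1 ≤ M) :
    Real.exp 1 ≤ ((w+1)/w) * ((M+1)/M) ^ M := by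
  have hM0 : 0 < M := by linarith
  have h1 : Real.exp (1/(M+1)) ≤ (w+1)/w := by
    refine le_trans (Real.exp_le_exp.2 ?_) (exp_inv_le hw)
    apply one_div_le_one_div_of_le (by linarith) (by linarith)
  have h2 : Real.exp (M/(M+1)) ≤ ((M+1)/M) ^ M := by
    have hl : 1/(M+1) ≤ Real.log ((M+1)/M) := by
      have h2' := Real.log_le_sub_one_of_pos (show (0:ℝ) < M/(M+1) by positivity)
      have h3 : M/(M+1) - 1 = -(1/(M+1)) := by field_simp; ring
      have h4 : Real.log (M/(M+1)) = -Real.log ((M+1)/M) := by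
        rw [← Real.log_inv]; congr 1; field_simp
      rw [h4, h3] at h2'; linarith
    calc Real.exp (M/(M+1)) = Real.exp (M * (1/(M+1))) := by ring_nf
    _ ≤ Real.exp (M * Real.log ((M+1)/M)) := by
        exact Real.exp_le_exp.2 (mul_le_mul_of_nonneg_left hl hM0.le)
    _ = ((M+1)/M) ^ M := by
        rw [← Real.log_rpow (by positivity), Real.exp_log (Real.rpow_pos_of_pos (by positivity) _)]
  calc Real.exp 1 = Real.exp (1/(M+1)) * Real.exp (M/(M+1)) := by
        rw [← Real.exp_add]; congr 1; field_simp; ring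
  _ ≤ ((w+1)/w) * ((M+1)/M) ^ M := by
        apply mul_le_mul h1 h2 (Real.exp_pos _).le (by positivity)

lemma base_case {v s : ℝ} (hv : 1 ≤ v) (hs1 : 1 ≤ s) (hs2 : s ≤ 2) :
    Real.Gamma (v+s) * (v-1)^(v-1) * Real.exp (s+1) ≤
      Real.exp 3 * Real.Gamma v * (v+s)^(v+s-1) := by
  have hv0 : (0:ℝ) < v := by linarith
  have hG : 0 < Real.Gamma v := Real.Gamma_pos_of_pos hv0
  have h1 : Real.Gamma (v+s) ≤ v * Real.Gamma v * (v+1)^(s-1) := by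
    have := gamma_interp (v := v+1) (s := s-1) (by linarith) (by linarith) (by linarith)
    have he : v + 1 + (s - 1) = v + s := by ring
    rw [he, Real.Gamma_add_one hv0.ne'] at this
    linarith [this]
  have h2 : (v-1)^(v-1) ≤ (v+1)^(v-1) :=
    Real.rpow_le_rpow (by linarith) (by linarith) (by linarith)
  have h3 : Real.exp (s+1) ≤ Real.exp 3 := Real.exp_le_exp.2 (by linarith)
  calc Real.Gamma (v+s) * (v-1)^(v-1) * Real.exp (s+1)
      ≤ (v * Real.Gamma v * (v+1)^(s-1)) * ((v+1)^(v-1)) * Real.exp 3 := by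
        apply mul_le_mul (mul_le_mul h1 h2 (Real.rpow_nonneg (by linarith) _)
          (by positivity)) h3 (Real.exp_pos _).le (by positivity)
    _ = Real.exp 3 * Real.Gamma v * (v * ((v+1)^(s-1) * (v+1)^(v-1))) := by ring
    _ = Real.exp 3 * Real.Gamma v * (v * (v+1)^(v+s-2)) := by
        rw [← Real.rpow_add (by linarith : (0:ℝ) < v+1)]; ring_nf
    _ ≤ Real.exp 3 * Real.Gamma v * (v+s)^(v+s-1) := by
        apply mul_le_mul_of_nonneg_left _ (by positivity)
        calc v * (v+1)^(v+s-2) ≤ (v+1) * (v+1)^(v+s-2) := by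
              apply mul_le_mul_of_nonneg_right (by linarith) (by positivity)
          _ = (v+1)^(v+s-1) := by
              rw [← Real.rpow_one_add' (by linarith) (by intro h; nlinarith)]; ring_nf
          _ ≤ (v+s)^(v+s-1) :=
              Real.rpow_le_rpow (by linarith) (by linarith) (by linarith)

lemma aux_ind {v s : ℝ} (hv : 1 ≤ v) (hs1 : 1 ≤ s) (hs2 : s ≤ 2) : ∀ n : ℕ,
    Real.Gamma (v+s+n) * (v-1)^(v-1) * Real.exp (s+n+1) ≤
      Real.exp 3 * ((v+n)/v) * Real.Gamma v * (v+s+n)^(v+s+n-1) := by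
  have hv0 : (0:ℝ) < v := by linarith
  intro n
  induction n with
  | zero => simpa [div_self hv0.ne'] using base_case hv hs1 hs2
  | succ n ih =>
    set M := v + s + n with hMdef
    have hM0 : (0:ℝ) < M := by positivity
    have hwM : (v + n) + 1 ≤ M := by simp only [hMdef]; linarith
    have hw0 : (0:ℝ) < v + n := by positivity
    have e1 : v + s + ((n:ℝ)+1) = M + 1 := by ring
    have push : ((n+1 : ℕ) : ℝ) = (n:ℝ) + 1 := by push_cast; ring
    rw [push, e1, show v + ((n:ℝ)+1) = v + (n:ℝ) + 1 from by ring]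
    have hGam : Real.Gamma (M+1) = M * Real.Gamma M := Real.Gamma_add_one hM0.ne'
    have hexp : Real.exp (s+((n:ℝ)+1)+1) = Real.exp (s+n+1) * Real.exp 1 := by
      rw [← Real.exp_add]; ring_nf
    have key : M * Real.exp 1 * (Real.exp 3 * ((v+n)/v) * Real.Gamma v * M^(M-1)) ≤
        Real.exp 3 * ((v+(n:ℝ)+1)/v) * Real.Gamma v * (M+1)^(M+1-1) := by
      have hMM : M * M^(M-1) = M^M := by
        rw [← Real.rpow_one_add' hM0.le (by intro h; nlinarith)]; ring_nf
      have hstep := step_ineq hw0 hwM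
      have hGv : 0 < Real.Gamma v := Real.Gamma_pos_of_pos hv0
      have hMpow : (0:ℝ) < M^M := Real.rpow_pos_of_pos hM0 _
      have hdiv : ((M+1)/M)^M = (M+1)^M / M^M :=
        Real.div_rpow (by linarith : (0:ℝ) ≤ M+1) hM0.le M
      have hsimp : (M+1)^(M+1-1) = (M+1)^M := by norm_num
      rw [hsimp]
      have : M * Real.exp 1 * (((v+n)/v) * M^(M-1)) ≤ ((v+(n:ℝ)+1)/v) * (M+1)^M := by
        calc M * Real.exp 1 * (((v+n)/v) * M^(M-1))
            = Real.exp 1 * (((v+n)/v) * (M * M^(M-1))) := by ring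
          _ = Real.exp 1 * (((v+n)/v) * M^M) := by rw [hMM]
          _ ≤ (((v+(n:ℝ))+1)/(v+n) * ((M+1)/M)^M) * (((v+n)/v) * M^M) := by
              apply mul_le_mul_of_nonneg_right hstep (by positivity)
          _ = ((v+(n:ℝ)+1)/v) * (M+1)^M := by
              rw [hdiv]; field_simp
      calc M * Real.exp 1 * (Real.exp 3 * ((v+n)/v) * Real.Gamma v * M^(M-1))
          = (Real.exp 3 * Real.Gamma v) * (M * Real.exp 1 * (((v+n)/v) * M^(M-1))) := by ring
        _ ≤ (Real.exp 3 * Real.Gamma v) * (((v+(n:ℝ)+1)/v) * (M+1)^M) := by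
            apply mul_le_mul_of_nonneg_left this (by positivity)
        _ = Real.exp 3 * ((v+(n:ℝ)+1)/v) * Real.Gamma v * (M+1)^M := by ring
    calc Real.Gamma (M+1) * (v-1)^(v-1) * Real.exp (s+((n:ℝ)+1)+1)
        = M * Real.exp 1 * (Real.Gamma M * (v-1)^(v-1) * Real.exp (s+n+1)) := by
          rw [hGam, hexp]; ring
      _ ≤ M * Real.exp 1 * (Real.exp 3 * ((v+n)/v) * Real.Gamma v * M^(M-1)) := by
          apply mul_le_mul_of_nonneg_left ih (by positivity)
      _ ≤ Real.exp 3 * ((v+(n:ℝ)+1)/v) * Real.Gamma v * (M+1)^(M+1-1) := key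

lemma sup_bound {x c N : ℝ} (hx0 : 0 < x) (hx1 : x < 1) (hc : 0 ≤ c) (hN : 0 < N) :
    (1-x)^c * Real.exp (N*x) ≤ Real.exp (N - c) * (c/N)^c := by
  have hy : (0:ℝ) < 1 - x := by linarith
  rcases eq_or_lt_of_le hc with h0 | hcpos
  · rw [← h0, Real.rpow_zero, Real.rpow_zero, one_mul, mul_one]
    apply Real.exp_le_exp.2; nlinarith
  · have hq : (0:ℝ) < N * (1-x) / c := by positivity
    have h1 : c * Real.log (N*(1-x)/c) ≤ N*(1-x) - c := by
      calc c * Real.log (N*(1-x)/c) ≤ c * (N*(1-x)/c - 1) :=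
            mul_le_mul_of_nonneg_left (Real.log_le_sub_one_of_pos hq) hc
        _ = N*(1-x) - c := by field_simp
    have hlog : Real.log (N*(1-x)/c) = Real.log (1-x) - Real.log (c/N) := by
      rw [Real.log_div (by positivity) hcpos.ne', Real.log_mul hN.ne' hy.ne',
        Real.log_div hcpos.ne' hN.ne']
      ring
    have expand : c * Real.log (1-x) - c * Real.log (c/N) = c * Real.log (N*(1-x)/c) := by
      rw [hlog]; ring
    have hexpand2 : N * (1-x) = N - N*x := by ring
    rw [Real.rpow_def_of_pos hy, Real.rpow_def_of_pos (by positivity : (0:ℝ) < c/N),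
      ← Real.exp_add, ← Real.exp_add]
    apply Real.exp_le_exp.2
    nlinarith [h1, expand]

lemma pointwise_bound {ϱ u v : ℝ} (hϱ0 : 0 ≤ ϱ) (hϱ1 : ϱ < 1)
    (hu : 1 ≤ u) (hv : 1 ≤ v) (hc : u / (u + v) ≤ ϱ) (x : ℝ) :
    _root_.betaPDFReal u v x ≤ (Real.exp 3 / (1 - ϱ)) * gammaPDFReal u (u + v) x := by
  have hϱ' : (0:ℝ) < 1 - ϱ := by linarith
  have hN0 : (0:ℝ) < u + v := by linarith
  have hu0 : (0:ℝ) < u := by linarith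
  have hv0 : (0:ℝ) < v := by linarith
  have hGu : 0 < Real.Gamma u := Real.Gamma_pos_of_pos hu0
  have hGv : 0 < Real.Gamma v := Real.Gamma_pos_of_pos hv0
  unfold _root_.betaPDFReal
  split_ifs with hx
  swap
  · have := gammaPDFReal_nonneg hu0 hN0 x
    positivity
  obtain ⟨hx0, hx1⟩ := hx
  -- main Gamma ratio bound
  set n : ℕ := ⌊u - 1⌋₊ with hn
  have hnle : (n:ℝ) ≤ u - 1 := Nat.floor_le (by linarith)
  have hnge : u - 1 < (n:ℝ) + 1 := Nat.lt_floor_add_one _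
  set s : ℝ := u - n with hs
  have hs1 : 1 ≤ s := by simp only [hs]; linarith
  have hs2 : s ≤ 2 := by simp only [hs]; linarith
  have hkey := aux_ind hv hs1 hs2 n
  have e1 : v + s + (n:ℝ) = u + v := by simp only [hs]; ring
  have e2 : s + (n:ℝ) + 1 = u + 1 := by simp only [hs]; ring
  rw [e1, e2] at hkey
  -- ratio bound
  have hratio : (v + (n:ℝ))/v ≤ 1/(1-ϱ) := by
    have h1 : u ≤ ϱ * (u + v) := by
      rw [div_le_iff₀ hN0] at hc; linarith
    have h2 : (1 - ϱ) * (u + v) ≤ v := by nlinarith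
    rw [div_le_div_iff₀ hv0 hϱ']
    nlinarith
  have hkey2 : Real.Gamma (u+v) * (v-1)^(v-1) * Real.exp (u+1) ≤
      (Real.exp 3 / (1 - ϱ)) * Real.Gamma v * (u+v)^(u+v-1) := by
    refine le_trans hkey ?_
    have : Real.exp 3 * ((v + (n:ℝ))/v) ≤ Real.exp 3 / (1-ϱ) := by
      rw [div_eq_mul_inv (Real.exp 3), ← one_div]
      exact mul_le_mul_of_nonneg_left hratio (Real.exp_pos _).le
    apply mul_le_mul_of_nonneg_right _ (Real.rpow_nonneg hN0.le _)
    exact mul_le_mul_of_nonneg_right this hGv.le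
  -- sup bound with c = v - 1
  have hsup := sup_bound (x := x) (c := v-1) (N := u+v) hx0 hx1 (by linarith) hN0
  have e3 : u + v - (v - 1) = u + 1 := by ring
  rw [e3] at hsup
  -- combine
  have hcomb : Real.Gamma (u+v) * ((1-x)^(v-1) * Real.exp ((u+v)*x)) ≤
      (Real.exp 3 / (1 - ϱ)) * Real.Gamma v * (u+v)^u := by
    have hdiv : ((v-1)/(u+v))^(v-1) = (v-1)^(v-1) / (u+v)^(v-1) :=
      Real.div_rpow (by linarith) hN0.le _
    have hGN : 0 < Real.Gamma (u+v) := Real.Gamma_pos_of_pos hN0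
    calc Real.Gamma (u+v) * ((1-x)^(v-1) * Real.exp ((u+v)*x))
        ≤ Real.Gamma (u+v) * (Real.exp (u+1) * ((v-1)/(u+v))^(v-1)) :=
          mul_le_mul_of_nonneg_left hsup hGN.le
      _ = (Real.Gamma (u+v) * (v-1)^(v-1) * Real.exp (u+1)) / (u+v)^(v-1) := by
          rw [hdiv]; ring
      _ ≤ ((Real.exp 3 / (1 - ϱ)) * Real.Gamma v * (u+v)^(u+v-1)) / (u+v)^(v-1) := by
          exact (div_le_div_iff_of_pos_right (Real.rpow_pos_of_pos hN0 _)).2 hkey2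
      _ = (Real.exp 3 / (1 - ϱ)) * Real.Gamma v * (u+v)^u := by
          rw [mul_div_assoc, ← Real.rpow_sub hN0]
          norm_num
  rw [ProbabilityTheory.gammaPDFReal, if_pos hx0.le]
  set P : ℝ := x^(u-1) * Real.exp (-((u+v)*x)) / (Real.Gamma u * Real.Gamma v) with hP
  have hPnn : 0 ≤ P := by positivity
  have eL : Real.Gamma (u + v) / (Real.Gamma u * Real.Gamma v) * x ^ (u - 1) * (1 - x) ^ (v - 1)
      = (Real.Gamma (u+v) * ((1-x)^(v-1) * Real.exp ((u+v)*x))) * P := by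
    rw [hP, Real.exp_neg]
    field_simp
  have eR : Real.exp 3 / (1 - ϱ) *
        ((u+v) ^ u / Real.Gamma u * x ^ (u - 1) * Real.exp (-((u+v) * x)))
      = ((Real.exp 3 / (1 - ϱ)) * Real.Gamma v * (u+v)^u) * P := by
    rw [hP]
    field_simp
  calc Real.Gamma (u + v) / (Real.Gamma u * Real.Gamma v) * x ^ (u - 1) * (1 - x) ^ (v - 1)
      = (Real.Gamma (u+v) * ((1-x)^(v-1) * Real.exp ((u+v)*x))) * P := eL
    _ ≤ ((Real.exp 3 / (1 - ϱ)) * Real.Gamma v * (u+v)^u) * P :=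
        mul_le_mul_of_nonneg_right hcomb hPnn
    _ = _ := eR.symm

lemma betaPDFReal_nonneg {u v : ℝ} (hu : 0 < u) (hv : 0 < v) (x : ℝ) :
    0 ≤ _root_.betaPDFReal u v x := by
  unfold _root_.betaPDFReal
  split_ifs with hx
  · obtain ⟨h0, h1⟩ := hx
    have := Real.Gamma_pos_of_pos hu
    have := Real.Gamma_pos_of_pos hv
    have := Real.Gamma_pos_of_pos (by linarith : (0:ℝ) < u + v)
    have : (0:ℝ) ≤ 1 - x := by linarith
    positivity
  · exact le_refl 0

lemma integrable_gamma {a r : ℝ} (ha : 0 < a) (hr : 0 < r) :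
    Integrable (gammaPDFReal a r) := by
  constructor
  · exact (measurable_gammaPDFReal a r).aestronglyMeasurable
  · rw [hasFiniteIntegral_iff_ofReal (ae_of_all _ (gammaPDFReal_nonneg ha hr))]
    have : ∫⁻ x, ENNReal.ofReal (gammaPDFReal a r x) = 1 := lintegral_gammaPDF_eq_one ha hr
    rw [this]
    exact ENNReal.one_lt_top

/-- Comparison of the Beta(u,v) c.d.f. with the Gamma(u, u+v) c.d.f. -/
theorem beta_cdf_le_gamma_cdf (ϱ : ℝ) (hϱ : ϱ ∈ Set.Ico (0:ℝ) 1) :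
    ∃ C : ℝ, 0 < C ∧ ∀ u v : ℝ, 1 ≤ u → 1 ≤ v → u / (u + v) ≤ ϱ →
      ∀ t ∈ Set.Icc (0:ℝ) 1,
        (∫ x in Set.Iic t, _root_.betaPDFReal u v x) ≤
          C * ∫ x in Set.Iic t, gammaPDFReal u (u + v) x := by
  obtain ⟨hϱ0, hϱ1⟩ := hϱ
  refine ⟨Real.exp 3 / (1 - ϱ), div_pos (Real.exp_pos 3) (by linarith), ?_⟩
  intro u v hu hv hc t ht
  have hu0 : (0:ℝ) < u := by linarith
  have hN0 : (0:ℝ) < u + v := by linarith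
  have hgi : Integrable (fun x => (Real.exp 3 / (1 - ϱ)) * gammaPDFReal u (u+v) x)
      (volume.restrict (Set.Iic t)) :=
    ((integrable_gamma hu0 hN0).restrict.const_mul _)
  have hmono : (∫ x in Set.Iic t, _root_.betaPDFReal u v x) ≤
      ∫ x in Set.Iic t, (Real.exp 3 / (1 - ϱ)) * gammaPDFReal u (u+v) x := by
    apply integral_mono_of_nonneg
    · exact ae_of_all _ (betaPDFReal_nonneg hu0 (by linarith))
    · exact hgi
    · exact ae_of_all _ (pointwise_bound hϱ0 hϱ1 hu hv hc)
  rwa [integral_const_mul] at hmono
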